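/- Fix N ≥ 1, Ω = {0,1}^N, and κ ∈ (0,1). Call f : Ω → [0,1] a Bernoulli p-function if B_p{f ≤ ε} ≤ ε for all p ∈ [0,1] and ε > 0, an exchangeable p-function if P{f ≤ ε} ≤ ε for every exchangeable probability measure P on Ω and ε > 0, and call h : {0,…,N} → [0,1] a binomial p-function if Σ_{k : h(k) ≤ ε} binom(N,k)p^k(1−p)^{N−k} ≤ ε for all p ∈ [0,1], ε > 0. Then: (a) for every Bernoulli p-function f there exist an exchangeable p-function g and a binomial p-function h such that for every p ∈ [0,1], g(ω)·h(+ω) ≤ κ^{−1}·f(ω)^{1−κ} for B_p-almost every ω; (b) for every exchangeable p-function g and binomial p-function h, the function ω ↦ min(1, κ^{−2}·(g(ω)·h(+ω))^{1−κ}) is a Bernoulli p-function. -/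

import Mathlib

open MeasureTheory
open scoped ENNReal

/-- `cnt ω` is the number of 1s (`true`s) in the binary sequence `ω`. -/
def cnt {N : ℕ} (ω : Fin N → Bool) : ℕ := (Finset.univ.filter fun i => ω i = true).card

/-- The Bernoulli measure `B_p` on `{0,1}^N`: `B_p({ω}) = p^{+ω} (1-p)^{N-+ω}`. -/
noncomputable def bern (N : ℕ) (p : ℝ≥0∞) : Measure (Fin N → Bool) :=
  ∑ ω : Fin N → Bool, (p ^ cnt ω * (1 - p) ^ (N - cnt ω)) • Measure.dirac ω

/-- The binomial measure `bin_p` on `ℕ` (supported on `{0,…,N}`):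
`bin_p({k}) = binom(N,k) p^k (1-p)^{N-k}`. -/
noncomputable def binMeasure (N : ℕ) (p : ℝ≥0∞) : Measure ℕ :=
  ∑ k ∈ Finset.range (N + 1),
    ((N.choose k : ℝ≥0∞) * p ^ k * (1 - p) ^ (N - k)) • Measure.dirac k

open scoped Classical

variable {N : ℕ}

lemma cnt_le (ω : Fin N → Bool) : cnt ω ≤ N := by
  classical
  simpa [cnt] using (Finset.card_filter_le Finset.univ _).trans (by simp)

lemma meas_set_eq_sum (P : Measure (Fin N → Bool)) (S : Set (Fin N → Bool))
    [DecidablePred (· ∈ S)] :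
    P S = ∑ ω ∈ Finset.univ.filter (· ∈ S), P {ω} := by
  classical
  have hS : S = ⋃ ω ∈ Finset.univ.filter (· ∈ S), ({ω} : Set (Fin N → Bool)) := by
    ext x; simp
  nth_rewrite 1 [hS]
  exact measure_biUnion_finset
    (fun a _ b _ hab => by simp [Function.onFun, Set.disjoint_singleton_left, hab])
    (fun ω _ => measurableSet_singleton ω)

lemma bern_singleton (p : ℝ≥0∞) (ω : Fin N → Bool) :
    bern N p {ω} = p ^ cnt ω * (1 - p) ^ (N - cnt ω) := by
  classical
  rw [bern, Measure.finset_sum_apply]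
  rw [Finset.sum_eq_single ω]
  · rw [Measure.smul_apply, Measure.dirac_apply' _ (measurableSet_singleton ω),
      Set.indicator_of_mem (Set.mem_singleton ω), Pi.one_apply, smul_eq_mul, mul_one]
  · intro b _ hb
    rw [Measure.smul_apply, Measure.dirac_apply' _ (measurableSet_singleton ω),
      Set.indicator_of_notMem (by simp [hb]), smul_zero]
  · intro h; exact absurd (Finset.mem_univ ω) h

lemma bern_apply (p : ℝ≥0∞) (S : Set (Fin N → Bool)) [DecidablePred (· ∈ S)] :
    bern N p S = ∑ ω ∈ Finset.univ.filter (· ∈ S), p ^ cnt ω * (1 - p) ^ (N - cnt ω) := by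
  rw [meas_set_eq_sum]
  exact Finset.sum_congr rfl fun ω _ => bern_singleton p ω

lemma binMeasure_apply (p : ℝ≥0∞) (S : Set ℕ) [DecidablePred (· ∈ S)] :
    binMeasure N p S
      = ∑ k ∈ (Finset.range (N + 1)).filter (· ∈ S),
          (N.choose k : ℝ≥0∞) * p ^ k * (1 - p) ^ (N - k) := by
  classical
  rw [binMeasure, Measure.finset_sum_apply, Finset.sum_filter]
  refine Finset.sum_congr rfl fun k _ => ?_
  rw [Measure.smul_apply, Measure.dirac_apply' _ (MeasurableSet.of_discrete (s := S))]
  by_cases h : k ∈ S <;> simp [Set.indicator, h]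

def lvl (N k : ℕ) : Finset (Fin N → Bool) := Finset.univ.filter (fun ω => cnt ω = k)

lemma card_lvl (k : ℕ) : (lvl N k).card = N.choose k := by
  classical
  have : (lvl N k).card = (Finset.powersetCard k (Finset.univ : Finset (Fin N))).card := by
    refine Finset.card_bij (fun ω _ => Finset.univ.filter (fun i => ω i = true)) ?_ ?_ ?_
    · intro ω hω
      rw [Finset.mem_powersetCard]
      exact ⟨Finset.filter_subset _ _, by simpa [lvl, cnt] using (Finset.mem_filter.mp hω).2⟩
    · intro ω hω ω' hω' h
      funext i
      have := Finset.ext_iff.mp h i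
      simp only [Finset.mem_filter, Finset.mem_univ, true_and] at this
      by_cases hi : ω i = true
      · rw [hi, (this.mp hi).symm]
      · have hi' : ¬ ω' i = true := fun hc => hi (this.mpr hc)
        rw [Bool.not_eq_true] at hi hi'; rw [hi, hi']
    · intro s hs
      rw [Finset.mem_powersetCard] at hs
      refine ⟨fun i => decide (i ∈ s), ?_, ?_⟩
      · simp [lvl, cnt, ← hs.2]
      · ext i; simp
  rw [this, Finset.card_powersetCard, Finset.card_univ, Fintype.card_fin]

lemma cnt_comp_perm (π : Equiv.Perm (Fin N)) (ω : Fin N → Bool) :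
    cnt (fun i => ω (π i)) = cnt ω := by
  classical
  unfold cnt
  refine Finset.card_nbij' π π.symm ?_ ?_ ?_ ?_ <;> simp [Set.MapsTo, Set.LeftInvOn, Set.RightInvOn]

noncomputable def unif (N k : ℕ) : Measure (Fin N → Bool) :=
  ((N.choose k : ℝ≥0∞))⁻¹ • ∑ ω ∈ lvl N k, Measure.dirac ω

lemma unif_apply (k : ℕ) (S : Set (Fin N → Bool)) [DecidablePred (· ∈ S)] :
    unif N k S = (N.choose k : ℝ≥0∞)⁻¹ * ((lvl N k).filter (· ∈ S)).card := by
  classical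
  rw [unif, Measure.smul_apply, Measure.finset_sum_apply, smul_eq_mul]
  congr 1
  have : ∀ ω ∈ lvl N k, Measure.dirac ω S = if ω ∈ S then (1:ℝ≥0∞) else 0 := by
    intro ω _
    rw [Measure.dirac_apply' _ (MeasurableSet.of_discrete (s := S)), Set.indicator_apply]
    simp
  rw [Finset.sum_congr rfl this, Finset.sum_boole]

lemma unif_prob {k : ℕ} (hk : k ≤ N) : IsProbabilityMeasure (unif N k) := by
  constructor
  rw [unif, Measure.smul_apply, Measure.finset_sum_apply]
  have : ∀ ω ∈ lvl N k, Measure.dirac ω (Set.univ) = 1 := fun ω _ => by simp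
  rw [Finset.sum_congr rfl this, Finset.sum_const, card_lvl, nsmul_eq_mul, mul_one, smul_eq_mul]
  exact ENNReal.inv_mul_cancel (by exact_mod_cast (Nat.choose_pos hk).ne') (by simp)

lemma unif_exchangeable (k : ℕ) (π : Equiv.Perm (Fin N)) :
    (unif N k).map (fun ω i => ω (π i)) = unif N k := by
  classical
  have hT : Measurable (fun (ω : Fin N → Bool) i => ω (π i)) :=
    measurable_pi_lambda _ (fun i => measurable_pi_apply (π i))
  have hmap : ∀ s : Finset (Fin N → Bool),
      (∑ ω ∈ s, Measure.dirac ω).map (fun ω i => ω (π i))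
        = ∑ ω ∈ s, Measure.dirac (fun i => ω (π i)) := by
    intro s
    induction s using Finset.induction with
    | empty => simp
    | insert _ _ hx ih =>
      rw [Finset.sum_insert hx, Measure.map_add _ _ hT, Measure.map_dirac' hT,
        Finset.sum_insert hx, ih]
  rw [unif, Measure.map_smul, hmap]
  congr 1
  refine Finset.sum_nbij' (fun ω => fun i => ω (π i)) (fun ω => fun i => ω (π.symm i))
    ?_ ?_ ?_ ?_ ?_
  · intro ω hω
    simp only [lvl, Finset.mem_filter, Finset.mem_univ, true_and] at *
    rw [cnt_comp_perm]; exact hω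
  · intro ω hω
    simp only [lvl, Finset.mem_filter, Finset.mem_univ, true_and] at *
    rw [cnt_comp_perm π.symm ω]; exact hω
  · intro ω _; funext i; simp
  · intro ω _; funext i; simp
  · intro ω _; rfl

lemma meas_partition (P : Measure (Fin N → Bool)) (S : Set (Fin N → Bool)) :
    P S = ∑ k ∈ Finset.range (N + 1), P (S ∩ {ω | cnt ω = k}) := by
  classical
  rw [meas_set_eq_sum]
  have := Finset.sum_fiberwise_of_maps_to (g := cnt)
    (s := Finset.univ.filter (· ∈ S)) (t := Finset.range (N + 1))
    (fun ω _ => Finset.mem_range.mpr (Nat.lt_succ_of_le (cnt_le ω)))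
    (fun ω => P {ω})
  rw [← this]
  refine Finset.sum_congr rfl fun k _ => ?_
  rw [meas_set_eq_sum]
  refine Finset.sum_congr ?_ fun _ _ => rfl
  ext ω
  simp only [Finset.mem_filter, Finset.mem_univ, true_and, Set.mem_inter_iff,
    Set.mem_setOf_eq]

lemma bern_inter_lvl (p : ℝ≥0∞) {k : ℕ} (hk : k ≤ N) (A : Set (Fin N → Bool)) :
    bern N p (A ∩ {ω | cnt ω = k})
      = ((N.choose k : ℝ≥0∞) * p ^ k * (1 - p) ^ (N - k)) * unif N k A := by
  classical
  rw [bern_apply, unif_apply]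
  have hset : Finset.univ.filter (· ∈ A ∩ {ω | cnt ω = k}) = (lvl N k).filter (· ∈ A) := by
    ext ω
    simp only [lvl, Finset.mem_filter, Finset.mem_univ, true_and, Set.mem_inter_iff,
      Set.mem_setOf_eq]
    tauto
  rw [hset]
  have : ∀ ω ∈ (lvl N k).filter (· ∈ A),
      p ^ cnt ω * (1 - p) ^ (N - cnt ω) = p ^ k * (1 - p) ^ (N - k) := by
    intro ω hω
    have : cnt ω = k := (Finset.mem_filter.mp (Finset.mem_filter.mp hω).1).2
    rw [this]
  rw [Finset.sum_congr rfl this, Finset.sum_const, nsmul_eq_mul]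
  have hc : (N.choose k : ℝ≥0∞) * ((N.choose k : ℝ≥0∞))⁻¹ = 1 :=
    ENNReal.mul_inv_cancel (by exact_mod_cast (Nat.choose_pos hk).ne') (by simp)
  rw [show (N.choose k : ℝ≥0∞) * p ^ k * (1 - p) ^ (N - k)
      * ((N.choose k : ℝ≥0∞)⁻¹ * (((lvl N k).filter (· ∈ A)).card : ℝ≥0∞))
      = ((N.choose k : ℝ≥0∞) * (N.choose k : ℝ≥0∞)⁻¹)
        * ((((lvl N k).filter (· ∈ A)).card : ℝ≥0∞) * (p ^ k * (1 - p) ^ (N - k))) from by ring,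
    hc, one_mul]

lemma bern_prob (p : ℝ≥0∞) (hp : p ≤ 1) : IsProbabilityMeasure (bern N p) := by
  classical
  constructor
  rw [meas_partition (bern N p) Set.univ]
  have : ∀ k ∈ Finset.range (N + 1), bern N p (Set.univ ∩ {ω | cnt ω = k})
      = p ^ k * (1 - p) ^ (N - k) * (N.choose k : ℝ≥0∞) := by
    intro k hk
    rw [bern_inter_lvl p (Nat.lt_succ_iff.mp (Finset.mem_range.mp hk))]
    have : unif N k Set.univ = 1 := (unif_prob (Nat.lt_succ_iff.mp (Finset.mem_range.mp hk))).measure_univ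
    rw [this, mul_one]; ring
  rw [Finset.sum_congr rfl this, ← add_pow p (1-p) N]
  rw [add_tsub_cancel_of_le hp]
  exact one_pow N

lemma binMeasure_prob (p : ℝ≥0∞) (hp : p ≤ 1) : IsProbabilityMeasure (binMeasure N p) := by
  classical
  constructor
  rw [binMeasure_apply]
  have hset : (Finset.range (N+1)).filter (· ∈ (Set.univ : Set ℕ)) = Finset.range (N+1) :=
    Finset.filter_true_of_mem (fun _ _ => Set.mem_univ _)
  rw [hset]
  have : ∀ k ∈ Finset.range (N+1), (N.choose k : ℝ≥0∞) * p ^ k * (1 - p) ^ (N - k)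
      = p ^ k * (1 - p) ^ (N - k) * (N.choose k : ℝ≥0∞) := fun k _ => by ring
  rw [Finset.sum_congr rfl this, ← add_pow p (1-p) N, add_tsub_cancel_of_le hp]
  exact one_pow N

lemma key_real (θ : ℝ) (hθ0 : 0 < θ) (hθ1 : θ < 1) {A T C : ℝ}
    (hA : 0 < A) (hAT : A ≤ T) (hT : T ≤ 1) (hC0 : 0 ≤ C) (hCA : C ≤ A) :
    C * A ^ (-θ) + θ/(1-θ) * A ^ (1-θ) ≤ C * T ^ (-θ) + θ/(1-θ) * T ^ (1-θ) := by
  have hT0 : 0 < T := lt_of_lt_of_le hA hAT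
  set q : ℝ := θ/(1-θ) with hqdef
  have hq : q * (1-θ) = θ := div_mul_cancel₀ θ (by linarith)
  have hq0 : 0 ≤ q := div_nonneg hθ0.le (by linarith)
  have amgm : (A/T) ^ (1-θ) ≤ (1-θ) * (A/T) + θ := by
    have h := Real.geom_mean_le_arith_mean2_weighted (by linarith : (0:ℝ) ≤ 1-θ)
      hθ0.le (by positivity : (0:ℝ) ≤ A/T) zero_le_one (by ring)
    simpa using h
  have hdiv : (A/T) ^ (1-θ) = A ^ (1-θ) / T ^ (1-θ) := Real.div_rpow hA.le hT0.le (1-θ)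
  have hTsub : T ^ (1-θ) / T = T ^ (-θ) := by
    rw [eq_comm, show (-θ : ℝ) = 1-θ-1 by ring, Real.rpow_sub hT0, Real.rpow_one]
  have hTpos : 0 < T ^ (1-θ) := Real.rpow_pos_of_pos hT0 _
  have h1 : A ^ (1-θ) ≤ (1-θ) * (A * T^(-θ)) + θ * T^(1-θ) := by
    have h := mul_le_mul_of_nonneg_right amgm hTpos.le
    rw [hdiv, div_mul_cancel₀ _ hTpos.ne'] at h
    calc A ^ (1-θ) ≤ ((1-θ) * (A/T) + θ) * T ^ (1-θ) := h
      _ = (1-θ) * (A * (T ^ (1-θ) / T)) + θ * T^(1-θ) := by ring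
      _ = (1-θ) * (A * T^(-θ)) + θ * T^(1-θ) := by rw [hTsub]
  have h2 : T^(-θ) ≤ A^(-θ) := Real.rpow_le_rpow_of_nonpos hA hAT (neg_nonpos.mpr hθ0.le)
  have h3 : A * A^(-θ) = A^(1-θ) := by
    rw [show (1:ℝ)-θ = 1 + -θ by ring, Real.rpow_add hA, Real.rpow_one]
  have hmono : C * A^(-θ) - C * T^(-θ) ≤ A^(1-θ) - A * T^(-θ) := by
    nlinarith [mul_nonneg (sub_nonneg.mpr hCA) (sub_nonneg.mpr h2)]
  have h5 : q * A^(1-θ) ≤ q * ((1-θ) * (A * T^(-θ)) + θ * T^(1-θ)) :=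
    mul_le_mul_of_nonneg_left h1 hq0
  have h6 : q * ((1-θ) * (A * T^(-θ)) + θ * T^(1-θ))
      = θ * (A * T^(-θ)) + q * θ * T^(1-θ) := by
    linear_combination (A * T^(-θ)) * hq
  have h8 : q * T^(1-θ) = θ * T^(1-θ) + q * θ * T^(1-θ) := by
    linear_combination T^(1-θ) * hq
  linarith [h1, h5, h6, h8, hmono]

lemma key_ennreal (θ : ℝ) (hθ0 : 0 < θ) (hθ1 : θ < 1) (a t c : ℝ≥0∞)
    (ha0 : a ≠ 0) (hat : a ≤ t) (ht1 : t ≤ 1) (hca : c ≤ a) :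
    c * a ^ (-θ) + ENNReal.ofReal (θ/(1-θ)) * a ^ (1-θ)
      ≤ c * t ^ (-θ) + ENNReal.ofReal (θ/(1-θ)) * t ^ (1-θ) := by
  have hq0 : (0:ℝ) ≤ θ/(1-θ) := div_nonneg hθ0.le (by linarith)
  have hatop : a ≠ ⊤ := ((hat.trans ht1).trans_lt (by norm_num)).ne
  have httop : t ≠ ⊤ := (ht1.trans_lt (by norm_num)).ne
  have hctop : c ≠ ⊤ := ((hca.trans hat).trans ht1).trans_lt (by norm_num) |>.ne
  set A := a.toReal with hA
  set T := t.toReal with hT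
  set C := c.toReal with hC
  have hA0 : 0 < A := ENNReal.toReal_pos ha0 hatop
  have hT0 : 0 < T := ENNReal.toReal_pos (fun h => ha0 (le_antisymm (h ▸ hat) zero_le)) httop
  have haA : a = ENNReal.ofReal A := (ENNReal.ofReal_toReal hatop).symm
  have htT : t = ENNReal.ofReal T := (ENNReal.ofReal_toReal httop).symm
  have hcC : c = ENNReal.ofReal C := (ENNReal.ofReal_toReal hctop).symm
  have hAT : A ≤ T := ENNReal.toReal_le_toReal hatop httop |>.mpr hat
  have hT1 : T ≤ 1 := by
    have := ENNReal.toReal_le_toReal httop (by norm_num : (1:ℝ≥0∞) ≠ ⊤) |>.mpr ht1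
    simpa using this
  have hC0 : 0 ≤ C := ENNReal.toReal_nonneg
  have hCA : C ≤ A := ENNReal.toReal_le_toReal hctop hatop |>.mpr hca
  rw [haA, htT, hcC,
    ENNReal.ofReal_rpow_of_pos hA0, ENNReal.ofReal_rpow_of_pos hA0,
    ENNReal.ofReal_rpow_of_pos hT0, ENNReal.ofReal_rpow_of_pos hT0,
    ← ENNReal.ofReal_mul hC0, ← ENNReal.ofReal_mul hC0,
    ← ENNReal.ofReal_mul hq0, ← ENNReal.ofReal_mul hq0,
    ← ENNReal.ofReal_add (by positivity) (by positivity),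
    ← ENNReal.ofReal_add (by positivity) (by positivity)]
  exact ENNReal.ofReal_le_ofReal (key_real θ hθ0 hθ1 hA0 hAT hT1 hC0 hCA)

lemma moment_aux (θ : ℝ) (hθ0 : 0 < θ) (hθ1 : θ < 1) {ι : Type*} [DecidableEq ι]
    (b v : ι → ℝ≥0∞) :
    ∀ (n : ℕ) (s : Finset ι), s.card = n → ∀ (a c : ℝ≥0∞), a ≠ 0 → a ≤ 1 →
    (∀ i ∈ s, a ≤ v i) → (∀ i ∈ s, v i ≤ 1) →
    (∀ t : ℝ≥0∞, a ≤ t → t ≤ 1 → (∑ i ∈ s.filter (v · ≤ t), b i) + c ≤ t) →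
    ∑ i ∈ s, b i * v i ^ (-θ) + c * a ^ (-θ) + ENNReal.ofReal (θ/(1-θ)) * a ^ (1-θ)
      ≤ 1 + ENNReal.ofReal (θ/(1-θ)) := by
  intro n
  induction n with
  | zero =>
    intro s hcard a c ha0 ha1 _ _ hcum
    rw [Finset.card_eq_zero.mp hcard]
    have hca : c ≤ a := by
      have := hcum a le_rfl ha1
      simpa [Finset.card_eq_zero.mp hcard] using this
    have hatop : a ≠ ⊤ := (ha1.trans_lt (by norm_num)).ne
    have h1 : c * a ^ (-θ) ≤ a ^ (1 - θ) := by
      calc c * a ^ (-θ) ≤ a * a ^ (-θ) := mul_le_mul_left hca _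
        _ = a ^ (1:ℝ) * a ^ (-θ) := by rw [ENNReal.rpow_one]
        _ = a ^ (1 - θ) := by
            rw [← ENNReal.rpow_add 1 (-θ) ha0 hatop, show (1:ℝ) + -θ = 1 - θ from by ring]
    have h2 : a ^ (1-θ) ≤ 1 := ENNReal.rpow_le_one ha1 (by linarith)
    calc ∑ i ∈ (∅ : Finset ι), b i * v i ^ (-θ) + c * a ^ (-θ)
          + ENNReal.ofReal (θ/(1-θ)) * a ^ (1-θ)
        ≤ 0 + 1 + ENNReal.ofReal (θ/(1-θ)) * 1 := by
          exact add_le_add (add_le_add le_rfl (h1.trans h2)) (mul_le_mul_right h2 _)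
      _ = 1 + ENNReal.ofReal (θ/(1-θ)) := by rw [zero_add, mul_one]
  | succ n ih =>
    intro s hcard a c ha0 ha1 hva hv1 hcum
    have hs : s.Nonempty := Finset.card_pos.mp (hcard ▸ n.succ_pos)
    obtain ⟨i₀, hi₀, hmin⟩ := Finset.exists_min_image s v hs
    set t₁ := v i₀ with ht₁
    have hat₁ : a ≤ t₁ := hva i₀ hi₀
    have ht₁1 : t₁ ≤ 1 := hv1 i₀ hi₀
    have ht₁0 : t₁ ≠ 0 := fun h => ha0 (le_antisymm (h ▸ hat₁) zero_le)
    have hca : c ≤ a := by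
      have := hcum a le_rfl ha1
      exact le_trans le_add_self this
    have hk := ih (s.erase i₀) (by rw [Finset.card_erase_of_mem hi₀, hcard]; rfl)
      t₁ (c + b i₀) ht₁0 ht₁1
      (fun i hi => hmin i (Finset.mem_of_mem_erase hi))
      (fun i hi => hv1 i (Finset.mem_of_mem_erase hi))
      (fun t hta ht1 => by
        have hmem : i₀ ∈ s.filter (v · ≤ t) :=
          Finset.mem_filter.mpr ⟨hi₀, le_trans (le_of_eq ht₁.symm) hta⟩
        have hsum : ∑ i ∈ (s.erase i₀).filter (v · ≤ t), b i + b i₀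
            = ∑ i ∈ s.filter (v · ≤ t), b i := by
          rw [Finset.filter_erase, Finset.sum_erase_add _ _ hmem]
        calc ∑ i ∈ (s.erase i₀).filter (v · ≤ t), b i + (c + b i₀)
            = (∑ i ∈ (s.erase i₀).filter (v · ≤ t), b i + b i₀) + c := by ring
          _ = ∑ i ∈ s.filter (v · ≤ t), b i + c := by rw [hsum]
          _ ≤ t := hcum t (hat₁.trans hta) ht1)
    have hkey := key_ennreal θ hθ0 hθ1 a t₁ c ha0 hat₁ ht₁1 hca
    have hsplit : ∑ i ∈ s, b i * v i ^ (-θ)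
        = ∑ i ∈ s.erase i₀, b i * v i ^ (-θ) + b i₀ * t₁ ^ (-θ) := by
      rw [Finset.sum_erase_add _ _ hi₀]
    calc ∑ i ∈ s, b i * v i ^ (-θ) + c * a ^ (-θ) + ENNReal.ofReal (θ/(1-θ)) * a ^ (1-θ)
        = ∑ i ∈ s.erase i₀, b i * v i ^ (-θ) + b i₀ * t₁ ^ (-θ)
          + (c * a ^ (-θ) + ENNReal.ofReal (θ/(1-θ)) * a ^ (1-θ)) := by
          rw [hsplit]; ring
      _ ≤ ∑ i ∈ s.erase i₀, b i * v i ^ (-θ) + b i₀ * t₁ ^ (-θ)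
          + (c * t₁ ^ (-θ) + ENNReal.ofReal (θ/(1-θ)) * t₁ ^ (1-θ)) :=
          add_le_add le_rfl hkey
      _ = ∑ i ∈ s.erase i₀, b i * v i ^ (-θ) + (c + b i₀) * t₁ ^ (-θ)
          + ENNReal.ofReal (θ/(1-θ)) * t₁ ^ (1-θ) := by ring
      _ ≤ 1 + ENNReal.ofReal (θ/(1-θ)) := hk

lemma moment_lemma (θ : ℝ) (hθ0 : 0 < θ) (hθ1 : θ < 1) {ι : Type*} [DecidableEq ι]
    (s : Finset ι) (b v : ι → ℝ≥0∞)
    (hv0 : ∀ i ∈ s, v i ≠ 0) (hv1 : ∀ i ∈ s, v i ≤ 1)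
    (hcum : ∀ t : ℝ≥0∞, 0 < t → (∑ i ∈ s.filter (v · ≤ t), b i) ≤ min 1 t) :
    ∑ i ∈ s, b i * v i ^ (-θ) ≤ (ENNReal.ofReal (1-θ))⁻¹ := by
  have hfin : (ENNReal.ofReal (1-θ))⁻¹ = 1 + ENNReal.ofReal (θ/(1-θ)) := by
    rw [← ENNReal.ofReal_inv_of_pos (by linarith), ← ENNReal.ofReal_one,
      ← ENNReal.ofReal_add zero_le_one (div_nonneg hθ0.le (by linarith))]
    congr 1
    have h : (1:ℝ)-θ ≠ 0 := by linarith
    field_simp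
    ring
  rw [hfin]
  rcases s.eq_empty_or_nonempty with rfl | hs
  · simp
  obtain ⟨i₀, hi₀, hmin⟩ := Finset.exists_min_image s v hs
  have ha0 : v i₀ ≠ 0 := hv0 i₀ hi₀
  have ha1 : v i₀ ≤ 1 := hv1 i₀ hi₀
  have := moment_aux θ hθ0 hθ1 b v s.card s rfl (v i₀) 0 ha0 ha1 hmin hv1
    (fun t hta ht1 => by
      have h := hcum t (lt_of_lt_of_le (pos_iff_ne_zero.mpr ha0) hta)
      rw [add_zero]
      exact h.trans (min_le_right _ _))
  calc ∑ i ∈ s, b i * v i ^ (-θ)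
      ≤ ∑ i ∈ s, b i * v i ^ (-θ) + 0 * (v i₀) ^ (-θ)
        + ENNReal.ofReal (θ/(1-θ)) * (v i₀) ^ (1-θ) := le_add_right (le_add_right le_rfl)
    _ ≤ 1 + ENNReal.ofReal (θ/(1-θ)) := this

lemma partB (N : ℕ) (κ : ℝ) (hκ : κ ∈ Set.Ioo (0 : ℝ) 1)
    (g : (Fin N → Bool) → ℝ≥0∞) (h : ℕ → ℝ≥0∞)
    (hg1 : ∀ ω, g ω ≤ 1)
    (hgx : ∀ (P : Measure (Fin N → Bool)) [IsProbabilityMeasure P],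
      (∀ π : Equiv.Perm (Fin N), P.map (fun ω i => ω (π i)) = P) →
      ∀ ε : ℝ≥0∞, 0 < ε → P {ω | g ω ≤ ε} ≤ ε)
    (hh1 : ∀ k, h k ≤ 1)
    (hhb : ∀ p : ℝ≥0∞, p ≤ 1 → ∀ ε : ℝ≥0∞, 0 < ε → binMeasure N p {k | h k ≤ ε} ≤ ε)
    (p : ℝ≥0∞) (hp : p ≤ 1) (ε : ℝ≥0∞) (hε : 0 < ε) :
    bern N p {ω | min 1 (((ENNReal.ofReal κ) ^ 2)⁻¹ * (g ω * h (cnt ω)) ^ (1 - κ)) ≤ ε}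
      ≤ ε := by
  classical
  obtain ⟨hκ0, hκ1⟩ := hκ
  haveI hBp : IsProbabilityMeasure (bern N p) := bern_prob p hp
  haveI hbinp : IsProbabilityMeasure (binMeasure N p) := binMeasure_prob p hp
  by_cases hε1 : 1 ≤ ε
  · exact le_trans prob_le_one hε1
  push_neg at hε1
  set κ' := ENNReal.ofReal κ with hκ'
  have hκ'0 : κ' ≠ 0 := by
    simp [hκ', ENNReal.ofReal_eq_zero]; linarith
  have hκ'top : κ' ≠ ⊤ := ENNReal.ofReal_ne_top
  have h2 : κ'^2 ≠ 0 := pow_ne_zero 2 hκ'0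
  have h2t : κ'^2 ≠ ⊤ := by
    exact ENNReal.pow_ne_top hκ'top
  have hεtop : ε ≠ ⊤ := (hε1.trans (by norm_num)).ne
  have h1κ : (0:ℝ) < 1 - κ := by linarith
  set δ : ℝ≥0∞ := (κ'^2 * ε) ^ ((1-κ)⁻¹) with hδdef
  have hbase0 : κ'^2 * ε ≠ 0 := mul_ne_zero h2 hε.ne'
  have hbasetop : κ'^2 * ε ≠ ⊤ := ENNReal.mul_ne_top h2t hεtop
  have hδ0 : δ ≠ 0 := (ENNReal.rpow_pos (pos_iff_ne_zero.mpr hbase0) hbasetop).ne'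
  have hδκ : δ ^ (1-κ) = κ'^2 * ε := by
    rw [hδdef, ← ENNReal.rpow_mul, inv_mul_cancel₀ h1κ.ne', ENNReal.rpow_one]
  have hseteq : {ω | min 1 ((κ'^2)⁻¹ * (g ω * h (cnt ω)) ^ (1 - κ)) ≤ ε}
      = {ω | g ω * h (cnt ω) ≤ δ} := by
    ext ω
    simp only [Set.mem_setOf_eq]
    rw [min_le_iff]
    have hnot : ¬ (1:ℝ≥0∞) ≤ ε := not_le.mpr hε1
    constructor
    · rintro (hc | hc)
      · exact absurd hc hnot
      · have : (g ω * h (cnt ω)) ^ (1-κ) ≤ κ'^2 * ε := by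
          rw [← ENNReal.mul_le_mul_iff_right h2 h2t, ← mul_assoc,
            ENNReal.mul_inv_cancel h2 h2t, one_mul] at hc
          exact hc
        have := (ENNReal.rpow_le_rpow_iff (z := (1-κ)⁻¹) (by positivity)).mpr this
        rwa [← ENNReal.rpow_mul, mul_inv_cancel₀ h1κ.ne', ENNReal.rpow_one] at this
    · intro hc
      right
      have : (g ω * h (cnt ω)) ^ (1-κ) ≤ δ ^ (1-κ) :=
        (ENNReal.rpow_le_rpow_iff h1κ).mpr hc
      rw [hδκ] at this
      rw [← ENNReal.mul_le_mul_iff_right h2 h2t, ← mul_assoc,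
        ENNReal.mul_inv_cancel h2 h2t, one_mul]
      exact this
  rw [hseteq, meas_partition]
  -- per-level bound
  have hlvl : ∀ k ∈ Finset.range (N+1),
      bern N p ({ω | g ω * h (cnt ω) ≤ δ} ∩ {ω | cnt ω = k})
        ≤ ((N.choose k : ℝ≥0∞) * p ^ k * (1 - p) ^ (N - k)) * min 1 (δ / h k) := by
    intro k hk
    have hkN : k ≤ N := Nat.lt_succ_iff.mp (Finset.mem_range.mp hk)
    have hset2 : {ω | g ω * h (cnt ω) ≤ δ} ∩ {ω | cnt ω = k}
        = {ω | g ω * h k ≤ δ} ∩ {ω | cnt ω = k} := by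
      ext ω
      simp only [Set.mem_inter_iff, Set.mem_setOf_eq]
      constructor
      · rintro ⟨h1, h2⟩; exact ⟨by rwa [h2] at h1, h2⟩
      · rintro ⟨h1, h2⟩; exact ⟨by rwa [h2], h2⟩
    rw [hset2, bern_inter_lvl p hkN]
    refine mul_le_mul_right ?_ _
    haveI := unif_prob (N := N) hkN
    refine le_min prob_le_one ?_
    by_cases hhk : h k = 0
    · rw [hhk, ENNReal.div_zero hδ0]
      exact le_top
    · have hsub : {ω | g ω * h k ≤ δ} ⊆ {ω | g ω ≤ δ / h k} := by
        intro ω hω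
        exact (ENNReal.le_div_iff_mul_le (Or.inl hhk)
          (Or.inl (((hh1 k).trans_lt (by norm_num)).ne))).mpr hω
      have hpos : 0 < δ / h k :=
        ENNReal.div_pos hδ0 (((hh1 k).trans_lt (by norm_num)).ne)
      exact le_trans (measure_mono hsub)
        (hgx (unif N k) (fun π => unif_exchangeable k π) _ hpos)
  -- zero terms
  have hzero : ∀ k ∈ Finset.range (N+1), h k = 0 →
      ((N.choose k : ℝ≥0∞) * p ^ k * (1 - p) ^ (N - k)) = 0 := by
    intro k hk hhk
    set w := (N.choose k : ℝ≥0∞) * p ^ k * (1 - p) ^ (N - k) with hw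
    have hle : ∀ t : ℝ≥0∞, 0 < t → w ≤ t := by
      intro t ht
      have hb := hhb p hp t ht
      rw [binMeasure_apply] at hb
      refine le_trans ?_ hb
      refine Finset.single_le_sum (f := fun k => (N.choose k : ℝ≥0∞) * p ^ k * (1 - p) ^ (N - k))
        (fun i _ => zero_le) ?_
      exact Finset.mem_filter.mpr ⟨hk, (show h k ≤ t by rw [hhk]; exact zero_le)⟩
    by_contra hne
    have hwtop : w ≠ ⊤ := ((hle 1 one_pos).trans_lt (by norm_num)).ne
    exact absurd (hle (w/2) (ENNReal.half_pos hne)) (not_le.mpr (ENNReal.half_lt_self hne hwtop))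
  set s : Finset ℕ := (Finset.range (N+1)).filter (fun k => h k ≠ 0) with hs
  have hmom : ∑ k ∈ s, ((N.choose k : ℝ≥0∞) * p ^ k * (1 - p) ^ (N - k)) * (h k) ^ (-(1-κ))
      ≤ (ENNReal.ofReal κ)⁻¹ := by
    have := moment_lemma (1-κ) h1κ (by linarith) s
      (fun k => (N.choose k : ℝ≥0∞) * p ^ k * (1 - p) ^ (N - k)) h
      (fun k hk => (Finset.mem_filter.mp hk).2)
      (fun k _ => hh1 k)
      (fun t ht => by
        have hb := hhb p hp t ht
        rw [binMeasure_apply] at hb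
        refine le_min ?_ ?_
        · refine le_trans ?_ (prob_le_one (μ := binMeasure N p) (s := {k | h k ≤ t}))
          rw [binMeasure_apply]
          refine Finset.sum_le_sum_of_subset ?_
          intro k hk
          simp only [hs, Finset.mem_filter, Finset.mem_range] at hk ⊢
          exact ⟨hk.1.1, hk.2⟩
        · refine le_trans ?_ hb
          refine Finset.sum_le_sum_of_subset ?_
          intro k hk
          simp only [hs, Finset.mem_filter, Finset.mem_range] at hk ⊢
          exact ⟨hk.1.1, hk.2⟩)
    have hfix : (1:ℝ) - (1-κ) = κ := by ring
    rwa [hfix] at this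
  calc ∑ k ∈ Finset.range (N+1), bern N p ({ω | g ω * h (cnt ω) ≤ δ} ∩ {ω | cnt ω = k})
      ≤ ∑ k ∈ Finset.range (N+1),
          ((N.choose k : ℝ≥0∞) * p ^ k * (1 - p) ^ (N - k)) * min 1 (δ / h k) :=
        Finset.sum_le_sum hlvl
    _ = ∑ k ∈ s, ((N.choose k : ℝ≥0∞) * p ^ k * (1 - p) ^ (N - k)) * min 1 (δ / h k) := by
        rw [hs, Finset.sum_filter_of_ne]
        intro k hk hne
        intro hhk
        exact hne (by rw [hzero k hk hhk, zero_mul])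
    _ ≤ ∑ k ∈ s, ((N.choose k : ℝ≥0∞) * p ^ k * (1 - p) ^ (N - k))
          * (δ ^ (1-κ) * (h k) ^ (-(1-κ))) := by
        refine Finset.sum_le_sum fun k hk => mul_le_mul_right ?_ _
        have hmin : min 1 (δ / h k) ≤ (δ / h k) ^ (1-κ) := by
          rcases le_total (δ / h k) 1 with hc | hc
          · calc min 1 (δ / h k) ≤ δ / h k := min_le_right _ _
              _ = (δ / h k) ^ (1:ℝ) := (ENNReal.rpow_one _).symm
              _ ≤ (δ / h k) ^ (1-κ) := ENNReal.rpow_le_rpow_of_exponent_ge hc (by linarith)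
          · calc min 1 (δ / h k) ≤ 1 := min_le_left _ _
              _ = (δ / h k) ^ (0:ℝ) := (ENNReal.rpow_zero).symm
              _ ≤ (δ / h k) ^ (1-κ) := ENNReal.rpow_le_rpow_of_exponent_le hc (by linarith)
        refine hmin.trans (le_of_eq ?_)
        rw [ENNReal.div_rpow_of_nonneg _ _ h1κ.le, ENNReal.div_eq_inv_mul,
          ENNReal.rpow_neg, mul_comm]
    _ = δ ^ (1-κ) * ∑ k ∈ s, ((N.choose k : ℝ≥0∞) * p ^ k * (1 - p) ^ (N - k))
          * (h k) ^ (-(1-κ)) := by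
        rw [Finset.mul_sum]
        refine Finset.sum_congr rfl fun k _ => by ring
    _ ≤ (κ'^2 * ε) * (ENNReal.ofReal κ)⁻¹ := by
        rw [hδκ]
        exact mul_le_mul_right hmom _
    _ = κ' * ε := by
        rw [← hκ', pow_two]
        calc κ' * κ' * ε * κ'⁻¹ = (κ' * κ'⁻¹) * (κ' * ε) := by ring
          _ = κ' * ε := by rw [ENNReal.mul_inv_cancel hκ'0 hκ'top, one_mul]
    _ ≤ 1 * ε := mul_le_mul_left (ENNReal.ofReal_le_one.mpr hκ1.le) _
    _ = ε := one_mul ε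

lemma eq_zero_of_le_all {x : ℝ≥0∞} (hx : x ≠ ⊤) (h : ∀ t : ℝ≥0∞, 0 < t → x ≤ t) : x = 0 := by
  by_contra hne
  exact absurd (h _ (ENNReal.half_pos hne)) (not_le.mpr (ENNReal.half_lt_self hne hx))

lemma exists_perm {ω ω' : Fin N → Bool} (hc : cnt ω = cnt ω') :
    ∃ π : Equiv.Perm (Fin N), ω' = fun i => ω (π i) := by
  classical
  have hcard : Fintype.card {i // ω' i = true} = Fintype.card {i // ω i = true} := by
    rw [Fintype.card_subtype, Fintype.card_subtype]
    exact hc.symm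
  have hcard' : Fintype.card {i // ¬ ω' i = true} = Fintype.card {i // ¬ ω i = true} := by
    rw [Fintype.card_subtype_compl, Fintype.card_subtype_compl, hcard]
  set e := Fintype.equivOfCardEq hcard
  set ef := Fintype.equivOfCardEq hcard'
  refine ⟨Equiv.subtypeCongr e ef, ?_⟩
  funext i
  by_cases hi : ω' i = true
  · have happ : Equiv.subtypeCongr e ef i = (e ⟨i, hi⟩ : Fin N) := by
      simp [Equiv.subtypeCongr, hi]
    rw [happ, (e ⟨i, hi⟩).2, hi]
  · have happ : Equiv.subtypeCongr e ef i = (ef ⟨i, hi⟩ : Fin N) := by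
      simp [Equiv.subtypeCongr, hi]
    rw [happ]
    have h2 := (ef ⟨i, hi⟩).2
    rw [Bool.not_eq_true] at h2 hi
    rw [h2, hi]

noncomputable def gfun (N : ℕ) (f : (Fin N → Bool) → ℝ≥0∞) (ω : Fin N → Bool) : ℝ≥0∞ :=
  unif N (cnt ω) {ω' | f ω' ≤ f ω}

lemma gfun_le_one (f : (Fin N → Bool) → ℝ≥0∞) (ω : Fin N → Bool) : gfun N f ω ≤ 1 := by
  haveI := unif_prob (N := N) (cnt_le ω)
  exact prob_le_one

lemma gfun_pos (f : (Fin N → Bool) → ℝ≥0∞) (ω : Fin N → Bool) : gfun N f ω ≠ 0 := by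
  classical
  rw [gfun, unif_apply]
  refine mul_ne_zero (by simp) ?_
  have hmem : ω ∈ (lvl N (cnt ω)).filter (· ∈ {ω' | f ω' ≤ f ω}) := by
    refine Finset.mem_filter.mpr ⟨?_, (le_rfl : f ω ≤ f ω)⟩
    simp [lvl]
  simpa using Finset.card_ne_zero_of_mem hmem

lemma card_pvalue (f : (Fin N → Bool) → ℝ≥0∞) (k : ℕ) (ε : ℝ≥0∞) :
    (((lvl N k).filter (fun ω => gfun N f ω ≤ ε)).card : ℝ≥0∞) ≤ ε * (N.choose k) := by
  classical
  set A := (lvl N k).filter (fun ω => gfun N f ω ≤ ε) with hA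
  rcases A.eq_empty_or_nonempty with he | hne
  · rw [he]; simp
  obtain ⟨ωs, hωs, hmax⟩ := Finset.exists_max_image A f hne
  have hωlvl : ωs ∈ lvl N k := (Finset.mem_filter.mp hωs).1
  have hcnt : cnt ωs = k := (Finset.mem_filter.mp hωlvl).2
  have hkN : k ≤ N := hcnt ▸ cnt_le ωs
  have hgε : gfun N f ωs ≤ ε := (Finset.mem_filter.mp hωs).2
  set B := (lvl N k).filter (· ∈ {ω' | f ω' ≤ f ωs}) with hB
  have hsub : A ⊆ B := by
    intro ω hω
    exact Finset.mem_filter.mpr ⟨(Finset.mem_filter.mp hω).1, hmax ω hω⟩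
  have hcards : (A.card : ℝ≥0∞) ≤ (B.card : ℝ≥0∞) := by
    exact_mod_cast Finset.card_le_card hsub
  have hBg : (B.card : ℝ≥0∞) = (N.choose k : ℝ≥0∞) * gfun N f ωs := by
    rw [gfun, hcnt, unif_apply, ← mul_assoc,
      ENNReal.mul_inv_cancel (by exact_mod_cast (Nat.choose_pos hkN).ne') (by simp), one_mul]
  calc (A.card : ℝ≥0∞) ≤ (B.card : ℝ≥0∞) := hcards
    _ = (N.choose k : ℝ≥0∞) * gfun N f ωs := hBg
    _ ≤ (N.choose k : ℝ≥0∞) * ε := mul_le_mul_right hgε _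
    _ = ε * (N.choose k) := mul_comm _ _

lemma g_exch (f : (Fin N → Bool) → ℝ≥0∞)
    (P : Measure (Fin N → Bool)) [IsProbabilityMeasure P]
    (hP : ∀ π : Equiv.Perm (Fin N), P.map (fun ω i => ω (π i)) = P)
    (ε : ℝ≥0∞) (hε : 0 < ε) : P {ω | gfun N f ω ≤ ε} ≤ ε := by
  classical
  have hconst : ∀ ω ω' : Fin N → Bool, cnt ω = cnt ω' → P {ω} = P {ω'} := by
    intro ω ω' hc
    obtain ⟨π, hπ⟩ := exists_perm hc
    have hT : Measurable (fun (x : Fin N → Bool) i => x (π i)) :=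
      measurable_pi_lambda _ (fun i => measurable_pi_apply (π i))
    have hmap := congrArg (fun μ : Measure (Fin N → Bool) => μ {ω'}) (hP π)
    rw [Measure.map_apply hT (measurableSet_singleton ω')] at hmap
    have hpre : (fun (x : Fin N → Bool) i => x (π i)) ⁻¹' {ω'} = {ω} := by
      ext x
      simp only [Set.mem_preimage, Set.mem_singleton_iff]
      constructor
      · intro hx
        funext j
        have := congrFun hx (π.symm j)
        rw [Equiv.apply_symm_apply] at this
        rw [this, hπ]
        simp
      · intro hx
        rw [hx, hπ]
    rw [hpre] at hmap
    exact hmap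
  -- partition
  rw [meas_partition]
  have hbound : ∀ k ∈ Finset.range (N+1),
      P ({ω | gfun N f ω ≤ ε} ∩ {ω | cnt ω = k}) ≤ ε * P {ω | cnt ω = k} := by
    intro k _
    set Fk := Finset.univ.filter (· ∈ ({ω | gfun N f ω ≤ ε} ∩ {ω | cnt ω = k})) with hFk
    rw [meas_set_eq_sum]
    rcases Fk.eq_empty_or_nonempty with he | hne
    · rw [← hFk, he, Finset.sum_empty]; exact zero_le
    obtain ⟨ω₀, hω₀⟩ := hne
    have hω₀k : cnt ω₀ = k := by
      have := (Finset.mem_filter.mp hω₀).2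
      exact this.2
    set c := P {ω₀} with hc
    have hflin : ∀ ω ∈ Fk, P {ω} = c := by
      intro ω hω
      have hk : cnt ω = k := ((Finset.mem_filter.mp hω).2).2
      exact hconst ω ω₀ (by rw [hk, hω₀k])
    have hlvlc : ∀ ω ∈ lvl N k, P {ω} = c := by
      intro ω hω
      have hk : cnt ω = k := (Finset.mem_filter.mp hω).2
      exact hconst ω ω₀ (by rw [hk, hω₀k])
    have hFksub : Fk ⊆ (lvl N k).filter (fun ω => gfun N f ω ≤ ε) := by
      intro ω hω
      have h2 := (Finset.mem_filter.mp hω).2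
      exact Finset.mem_filter.mpr ⟨Finset.mem_filter.mpr ⟨Finset.mem_univ _, h2.2⟩, h2.1⟩
    have hL : ∑ ω ∈ Fk, P {ω} = (Fk.card : ℝ≥0∞) * c := by
      rw [Finset.sum_congr rfl hflin, Finset.sum_const, nsmul_eq_mul]
    have hR : P {ω | cnt ω = k} = (N.choose k : ℝ≥0∞) * c := by
      rw [meas_set_eq_sum]
      have hlvleq : Finset.univ.filter (· ∈ {ω | cnt ω = k}) = lvl N k := by
        ext ω
        simp only [Finset.mem_filter, Finset.mem_univ, true_and, lvl, Set.mem_setOf_eq]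
      rw [Finset.sum_congr hlvleq hlvlc, Finset.sum_const, nsmul_eq_mul, card_lvl]
    rw [← hFk, hL, hR]
    calc (Fk.card : ℝ≥0∞) * c
        ≤ (((lvl N k).filter (fun ω => gfun N f ω ≤ ε)).card : ℝ≥0∞) * c := by
          exact mul_le_mul_left (by exact_mod_cast Finset.card_le_card hFksub) c
      _ ≤ (ε * (N.choose k)) * c := mul_le_mul_left (card_pvalue f k ε) c
      _ = ε * ((N.choose k : ℝ≥0∞) * c) := by ring
  calc ∑ k ∈ Finset.range (N+1), P ({ω | gfun N f ω ≤ ε} ∩ {ω | cnt ω = k})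
      ≤ ∑ k ∈ Finset.range (N+1), ε * P {ω | cnt ω = k} := Finset.sum_le_sum hbound
    _ = ε * ∑ k ∈ Finset.range (N+1), P {ω | cnt ω = k} := by rw [Finset.mul_sum]
    _ = ε * ∑ k ∈ Finset.range (N+1), P (Set.univ ∩ {ω | cnt ω = k}) := by
        congr 1
        exact Finset.sum_congr rfl fun k _ => by rw [Set.univ_inter]
    _ = ε * P Set.univ := by rw [← meas_partition]
    _ = ε := by rw [measure_univ, mul_one]

noncomputable def hfun (N : ℕ) (κ : ℝ) (f : (Fin N → Bool) → ℝ≥0∞) (k : ℕ) : ℝ≥0∞ :=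
  min 1 ((lvl N k).inf (fun ω => (ENNReal.ofReal κ)⁻¹ * f ω ^ (1-κ) / gfun N f ω))

lemma gh_le (κ : ℝ) (f : (Fin N → Bool) → ℝ≥0∞) (ω : Fin N → Bool) :
    gfun N f ω * hfun N κ f (cnt ω) ≤ (ENNReal.ofReal κ)⁻¹ * f ω ^ (1-κ) := by
  classical
  have hmem : ω ∈ lvl N (cnt ω) := by simp [lvl]
  have h1 : hfun N κ f (cnt ω) ≤ (ENNReal.ofReal κ)⁻¹ * f ω ^ (1-κ) / gfun N f ω :=
    (min_le_right _ _).trans (Finset.inf_le hmem)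
  have hgtop : gfun N f ω ≠ ⊤ := ((gfun_le_one f ω).trans_lt (by norm_num)).ne
  calc gfun N f ω * hfun N κ f (cnt ω)
      ≤ gfun N f ω * ((ENNReal.ofReal κ)⁻¹ * f ω ^ (1-κ) / gfun N f ω) :=
        mul_le_mul_right h1 _
    _ = (ENNReal.ofReal κ)⁻¹ * f ω ^ (1-κ) / gfun N f ω * gfun N f ω := mul_comm _ _
    _ = (ENNReal.ofReal κ)⁻¹ * f ω ^ (1-κ) :=
        ENNReal.div_mul_cancel (gfun_pos f ω) hgtop

lemma hfun_bin (κ : ℝ) (hκ : κ ∈ Set.Ioo (0:ℝ) 1) (f : (Fin N → Bool) → ℝ≥0∞)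
    (hf1 : ∀ ω, f ω ≤ 1)
    (hfb : ∀ p : ℝ≥0∞, p ≤ 1 → ∀ ε : ℝ≥0∞, 0 < ε → bern N p {ω | f ω ≤ ε} ≤ ε)
    (p : ℝ≥0∞) (hp : p ≤ 1) (ε : ℝ≥0∞) (hε : 0 < ε) :
    binMeasure N p {k | hfun N κ f k ≤ ε} ≤ ε := by
  classical
  obtain ⟨hκ0, hκ1⟩ := hκ
  haveI hBp : IsProbabilityMeasure (bern N p) := bern_prob p hp
  haveI hbinp : IsProbabilityMeasure (binMeasure N p) := binMeasure_prob p hp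
  by_cases hε1 : 1 ≤ ε
  · exact le_trans prob_le_one hε1
  push_neg at hε1
  have hεtop : ε ≠ ⊤ := (hε1.trans (by norm_num)).ne
  set κ' := ENNReal.ofReal κ with hκ'
  have hκ'0 : κ' ≠ 0 := by
    simp [hκ', ENNReal.ofReal_eq_zero]; linarith
  have hκ'top : κ' ≠ ⊤ := ENNReal.ofReal_ne_top
  have h1κ : (0:ℝ) < 1 - κ := by linarith
  set w : ℕ → ℝ≥0∞ := fun k => (N.choose k : ℝ≥0∞) * p ^ k * (1 - p) ^ (N - k) with hw
  rw [binMeasure_apply]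
  set K := (Finset.range (N+1)).filter (· ∈ {k | hfun N κ f k ≤ ε}) with hK
  -- choice of witnesses
  have hch : ∀ k : ℕ, ∃ ω : Fin N → Bool, k ∈ K →
      (ω ∈ lvl N k ∧ κ'⁻¹ * f ω ^ (1-κ) / gfun N f ω ≤ ε) := by
    intro k
    by_cases hk : k ∈ K
    · have hhk : hfun N κ f k ≤ ε := (Finset.mem_filter.mp hk).2
      have hinf : (lvl N k).inf (fun ω => κ'⁻¹ * f ω ^ (1-κ) / gfun N f ω) ≤ ε := by
        rcases min_le_iff.mp hhk with hc | hc
        · exact absurd hc (not_le.mpr hε1)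
        · exact hc
      rcases (lvl N k).eq_empty_or_nonempty with he | hne
      · rw [he, Finset.inf_empty] at hinf
        exact absurd (top_le_iff.mp hinf) hεtop
      obtain ⟨ω, hωmem, hωval⟩ := Finset.exists_mem_eq_inf (lvl N k) hne
        (fun ω => κ'⁻¹ * f ω ^ (1-κ) / gfun N f ω)
      exact ⟨ω, fun _ => ⟨hωmem, hωval ▸ hinf⟩⟩
    · exact ⟨fun _ => true, fun h => absurd h hk⟩
  choose W hW using hch
  have hWl : ∀ k ∈ K, W k ∈ lvl N k := fun k hk => (hW k hk).1
  have hWc : ∀ k ∈ K, cnt (W k) = k := fun k hk => (Finset.mem_filter.mp (hWl k hk)).2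
  have hWv : ∀ k ∈ K, f (W k) ^ (1-κ) ≤ κ' * (ε * gfun N f (W k)) := by
    intro k hk
    have hval := (hW k hk).2
    have ha0 : gfun N f (W k) ≠ 0 := gfun_pos f (W k)
    have hatop : gfun N f (W k) ≠ ⊤ := ((gfun_le_one f (W k)).trans_lt (by norm_num)).ne
    rw [ENNReal.div_le_iff_le_mul (Or.inl ha0) (Or.inl hatop)] at hval
    have := mul_le_mul_right hval κ'
    rwa [← mul_assoc, ENNReal.mul_inv_cancel hκ'0 hκ'top, one_mul] at this
  -- terms with f (W k) = 0 vanish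
  have hwa : ∀ k ∈ K, w k * gfun N f (W k)
      = bern N p ({ω | f ω ≤ f (W k)} ∩ {ω | cnt ω = k}) := by
    intro k hk
    have hkN : k ≤ N := Nat.lt_succ_iff.mp (Finset.mem_range.mp (Finset.mem_filter.mp hk).1)
    rw [bern_inter_lvl p hkN, hw]
    congr 1
    rw [gfun, hWc k hk]
  have hzero : ∀ k ∈ K, f (W k) = 0 → w k = 0 := by
    intro k hk hf0
    have hle : ∀ t : ℝ≥0∞, 0 < t → w k * gfun N f (W k) ≤ t := by
      intro t ht
      rw [hwa k hk]
      refine le_trans (measure_mono ?_) (hfb p hp t ht)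
      intro ω hω
      have := hω.1
      simp only [Set.mem_setOf_eq] at this ⊢
      exact le_trans this (hf0 ▸ (zero_le : (0:ℝ≥0∞) ≤ t))
    have hfin : w k * gfun N f (W k) ≠ ⊤ := by
      rw [hwa k hk]; exact (prob_le_one.trans_lt (by norm_num)).ne
    have h0 := eq_zero_of_le_all hfin hle
    rcases mul_eq_zero.mp h0 with h | h
    · exact h
    · exact absurd h (gfun_pos f (W k))
  set K' := K.filter (fun k => f (W k) ≠ 0) with hK'
  -- cumulative bound for the moment lemma
  have hcum : ∀ t : ℝ≥0∞, 0 < t →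
      ∑ k ∈ K'.filter (fun k => f (W k) ≤ t), w k * gfun N f (W k) ≤ min 1 t := by
    intro t ht
    set S := K'.filter (fun k => f (W k) ≤ t) with hS
    have hmemK : ∀ k ∈ S, k ∈ K := fun k hk =>
      Finset.mem_filter.mp (Finset.mem_filter.mp hk).1 |>.1
    have hsum : ∑ k ∈ S, w k * gfun N f (W k)
        = bern N p (⋃ k ∈ S, ({ω | f ω ≤ f (W k)} ∩ {ω | cnt ω = k})) := by
      rw [measure_biUnion_finset]
      · exact Finset.sum_congr rfl fun k hk => hwa k (hmemK k hk)
      · intro a _ b _ hab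
        refine Set.disjoint_left.mpr ?_
        intro ω hωa hωb
        exact hab (hωa.2.symm.trans hωb.2)
      · intro k _
        exact MeasurableSet.of_discrete
    rw [hsum]
    refine le_min prob_le_one ?_
    refine le_trans (measure_mono ?_) (hfb p hp t ht)
    intro ω hω
    simp only [Set.mem_iUnion] at hω
    obtain ⟨k, hk, hωk⟩ := hω
    have hft : f (W k) ≤ t := (Finset.mem_filter.mp hk).2
    exact Set.mem_setOf_eq ▸ le_trans hωk.1 hft
  have hmom : ∑ k ∈ K', (w k * gfun N f (W k)) * (f (W k)) ^ (-(1-κ)) ≤ κ'⁻¹ := by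
    have := moment_lemma (1-κ) h1κ (by linarith) K'
      (fun k => w k * gfun N f (W k)) (fun k => f (W k))
      (fun k hk => (Finset.mem_filter.mp hk).2)
      (fun k _ => hf1 (W k))
      hcum
    have hfix : (1:ℝ) - (1-κ) = κ := by ring
    rwa [hfix] at this
  -- conclude
  have hterm : ∀ k ∈ K', w k ≤ (κ' * ε) * ((w k * gfun N f (W k)) * (f (W k)) ^ (-(1-κ))) := by
    intro k hk
    have hkK : k ∈ K := (Finset.mem_filter.mp hk).1
    have hf0 : f (W k) ≠ 0 := (Finset.mem_filter.mp hk).2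
    have hftop : f (W k) ≠ ⊤ := ((hf1 (W k)).trans_lt (by norm_num)).ne
    have hr0 : (f (W k)) ^ (1-κ) ≠ 0 := (ENNReal.rpow_pos (pos_iff_ne_zero.mpr hf0) hftop).ne'
    have hrtop : (f (W k)) ^ (1-κ) ≠ ⊤ := ENNReal.rpow_ne_top_of_nonneg h1κ.le hftop
    have hcancel : (f (W k)) ^ (1-κ) * (f (W k)) ^ (-(1-κ)) = 1 := by
      rw [ENNReal.rpow_neg, ENNReal.mul_inv_cancel hr0 hrtop]
    calc w k = w k * ((f (W k)) ^ (1-κ) * (f (W k)) ^ (-(1-κ))) := by rw [hcancel, mul_one]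
      _ = (f (W k)) ^ (1-κ) * (w k * (f (W k)) ^ (-(1-κ))) := by ring
      _ ≤ (κ' * (ε * gfun N f (W k))) * (w k * (f (W k)) ^ (-(1-κ))) :=
          mul_le_mul_left (hWv k hkK) _
      _ = (κ' * ε) * ((w k * gfun N f (W k)) * (f (W k)) ^ (-(1-κ))) := by ring
  have hKK' : ∑ k ∈ K, w k = ∑ k ∈ K', w k := by
    refine (Finset.sum_subset (Finset.filter_subset _ _) ?_).symm
    intro k hk hnk
    have hnn : ¬ (f (W k) ≠ 0) := fun hh => hnk (Finset.mem_filter.mpr ⟨hk, hh⟩)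
    exact hzero k hk (not_not.mp hnn)
  calc ∑ k ∈ K, w k = ∑ k ∈ K', w k := hKK'
    _ ≤ ∑ k ∈ K', (κ' * ε) * ((w k * gfun N f (W k)) * (f (W k)) ^ (-(1-κ))) :=
        Finset.sum_le_sum hterm
    _ = (κ' * ε) * ∑ k ∈ K', (w k * gfun N f (W k)) * (f (W k)) ^ (-(1-κ)) := by
        rw [Finset.mul_sum]
    _ ≤ (κ' * ε) * κ'⁻¹ := mul_le_mul_right hmom _
    _ = (κ' * κ'⁻¹) * ε := by ring
    _ = ε := by rw [ENNReal.mul_inv_cancel hκ'0 hκ'top, one_mul]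

/-- let `Ω = {0,1}^N` and `κ ∈ (0,1)`.
(a) For every Bernoulli p-function `f` there are an exchangeable p-function `g`
and a binomial p-function `h` such that for every `p ∈ [0,1]`,
`g(ω)·h(+ω) ≤ κ⁻¹·f(ω)^{1-κ}` for `B_p`-almost every `ω`.
(b) For every exchangeable p-function `g` and binomial p-function `h`,
`ω ↦ min 1 (κ⁻²·(g(ω)·h(+ω))^{1-κ})` is a Bernoulli p-function. -/
theorem stmt17 (N : ℕ) (hN : 1 ≤ N) (κ : ℝ) (hκ : κ ∈ Set.Ioo (0 : ℝ) 1) :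
    (∀ f : (Fin N → Bool) → ℝ≥0∞, (∀ ω, f ω ≤ 1) →
      (∀ p : ℝ≥0∞, p ≤ 1 → ∀ ε : ℝ≥0∞, 0 < ε → bern N p {ω | f ω ≤ ε} ≤ ε) →
      ∃ g : (Fin N → Bool) → ℝ≥0∞, ∃ h : ℕ → ℝ≥0∞,
        (∀ ω, g ω ≤ 1) ∧
        (∀ (P : Measure (Fin N → Bool)) [IsProbabilityMeasure P],
          (∀ π : Equiv.Perm (Fin N), P.map (fun ω i => ω (π i)) = P) →
          ∀ ε : ℝ≥0∞, 0 < ε → P {ω | g ω ≤ ε} ≤ ε) ∧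
        (∀ k, h k ≤ 1) ∧
        (∀ p : ℝ≥0∞, p ≤ 1 → ∀ ε : ℝ≥0∞, 0 < ε →
          binMeasure N p {k | h k ≤ ε} ≤ ε) ∧
        (∀ p : ℝ≥0∞, p ≤ 1 → ∀ᵐ ω ∂(bern N p),
          g ω * h (cnt ω) ≤ (ENNReal.ofReal κ)⁻¹ * f ω ^ (1 - κ))) ∧
    (∀ g : (Fin N → Bool) → ℝ≥0∞, ∀ h : ℕ → ℝ≥0∞,
      (∀ ω, g ω ≤ 1) →
      (∀ (P : Measure (Fin N → Bool)) [IsProbabilityMeasure P],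
        (∀ π : Equiv.Perm (Fin N), P.map (fun ω i => ω (π i)) = P) →
        ∀ ε : ℝ≥0∞, 0 < ε → P {ω | g ω ≤ ε} ≤ ε) →
      (∀ k, h k ≤ 1) →
      (∀ p : ℝ≥0∞, p ≤ 1 → ∀ ε : ℝ≥0∞, 0 < ε →
        binMeasure N p {k | h k ≤ ε} ≤ ε) →
      ∀ p : ℝ≥0∞, p ≤ 1 → ∀ ε : ℝ≥0∞, 0 < ε →
        bern N p
          {ω | min 1 (((ENNReal.ofReal κ) ^ 2)⁻¹ * (g ω * h (cnt ω)) ^ (1 - κ)) ≤ ε}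
          ≤ ε) := by
  constructor
  · intro f hf1 hfb
    refine ⟨gfun N f, hfun N κ f, gfun_le_one f, ?_, fun k => min_le_left _ _, ?_, ?_⟩
    · intro P _inst hperm ε hε
      exact g_exch f P hperm ε hε
    · intro p hp ε hε
      exact hfun_bin κ hκ f hf1 hfb p hp ε hε
    · intro p hp
      exact Filter.Eventually.of_forall (fun ω => gh_le κ f ω)
  · intro g h hg1 hgx hh1 hhb p hp ε hε
    exact partB N κ hκ g h hg1 hgx hh1 hhb p hp ε hε
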